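/- Let φ be a satisfiable 2SAT formula on n variables, let w ∈ ℤ^n be a nonzero integer weight vector, and set W = Σ_{i=1}^n |w_i|. Then the maximum z* over the polytope Q_n of the function (y, x) ↦ ⟨c_φ, y⟩ + (1/(3W))·⟨w, x⟩ satisfies z* ≥ m(φ) − 1/3; moreover, every point (y^ψ, x^σ) of the generating set S that attains this maximum satisfies ψ = φ, and σ is a satisfying assignment of φ of maximum weight ⟨w, x^σ⟩ among all satisfying assignments of φ. -/

import Mathlib

/-- A 2SAT clause on `n` variables: an unordered pair of literals on distinct
variables. A literal is a pair `(i, b) : Fin n × Bool`, where `(i, true)` stands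
for `x_i` and `(i, false)` for `¬x_i`. -/
abbrev Clause (n : ℕ) := {C : Sym2 (Fin n × Bool) // ¬ (Sym2.map Prod.fst C).IsDiag}

/-- `σ` satisfies the formula `φ` if every clause of `φ` contains a literal made
true by `σ`. -/
def Satisfies {n : ℕ} (φ : Finset (Clause n)) (σ : Fin n → Bool) : Prop :=
  ∀ C ∈ φ, ∃ l ∈ C.1, σ l.1 = l.2

/-- The 0/1 encoding `y^φ` of a formula `φ`. -/
def yVec {n : ℕ} (φ : Finset (Clause n)) : Clause n → ℝ :=
  fun C => if C ∈ φ then 1 else 0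

/-- The 0/1 encoding `x^σ` of an assignment `σ`. -/
def xVec {n : ℕ} (σ : Fin n → Bool) : Fin n → ℝ :=
  fun i => if σ i then 1 else 0

/-- The set `S` of all pairs (encoded formula, encoded satisfying assignment). -/
def SatSet (n : ℕ) : Set ((Clause n → ℝ) × (Fin n → ℝ)) :=
  {p | ∃ (ψ : Finset (Clause n)) (σ : Fin n → Bool), Satisfies ψ σ ∧ p = (yVec ψ, xVec σ)}

/-- The polytope `Q_n`, the convex hull of `S`. -/
def Qn (n : ℕ) : Set ((Clause n → ℝ) × (Fin n → ℝ)) :=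
  convexHull ℝ (SatSet n)

/-- The objective vector `c_φ`: `+1` on clauses of `φ`, `-1` elsewhere. -/
def cVec {n : ℕ} (φ : Finset (Clause n)) : Clause n → ℝ :=
  fun C => if C ∈ φ then 1 else -1

-- auxiliary
noncomputable def objMap {n : ℕ} (φ : Finset (Clause n)) (k : ℝ) (w : Fin n → ℤ) :
    ((Clause n → ℝ) × (Fin n → ℝ)) →ₗ[ℝ] ℝ where
  toFun z := ∑ C : Clause n, cVec φ C * z.1 C + k * ∑ i, (w i : ℝ) * z.2 i
  map_add' a b := by
    simp only [Prod.fst_add, Prod.snd_add, Pi.add_apply, mul_add, Finset.sum_add_distrib]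
    ring
  map_smul' c a := by
    simp only [Prod.smul_fst, Prod.smul_snd, Pi.smul_apply, smul_eq_mul, RingHom.id_apply,
      Finset.mul_sum, mul_add]
    congr 1
    · exact Finset.sum_congr rfl fun i _ => by ring
    · exact Finset.sum_congr rfl fun i _ => by ring

lemma sum_cVec_yVec {n : ℕ} (φ ψ : Finset (Clause n)) :
    ∑ C : Clause n, cVec φ C * yVec ψ C
      = ((ψ ∩ φ).card : ℝ) - ((ψ \ φ).card : ℝ) := by
  have h : ∀ C : Clause n, cVec φ C * yVec ψ C
      = (if C ∈ ψ ∩ φ then (1:ℝ) else 0) - (if C ∈ ψ \ φ then (1:ℝ) else 0) := by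
    intro C
    by_cases h1 : C ∈ ψ <;> by_cases h2 : C ∈ φ <;>
      simp [cVec, yVec, Finset.mem_inter, Finset.mem_sdiff, h1, h2]
  rw [Finset.sum_congr rfl fun C _ => h C, Finset.sum_sub_distrib]
  rw [Finset.sum_ite_mem, Finset.sum_ite_mem, Finset.univ_inter, Finset.univ_inter]
  simp

lemma weight_abs_le {n : ℕ} (w : Fin n → ℤ) (σ : Fin n → Bool) :
    |∑ i, (w i : ℝ) * xVec σ i| ≤ ∑ i, |(w i : ℝ)| := by
  calc |∑ i, (w i:ℝ) * xVec σ i| ≤ ∑ i, |(w i:ℝ) * xVec σ i| :=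
        Finset.abs_sum_le_sum_abs _ _
  _ ≤ ∑ i, |(w i:ℝ)| := Finset.sum_le_sum fun i _ => by
      rw [abs_mul]
      have h1 : |xVec σ i| ≤ 1 := by unfold xVec; split <;> simp
      nlinarith [abs_nonneg ((w i:ℝ))]

example : True := trivial

lemma isGreatest_convexHull_real {s : Set ℝ} {a : ℝ} (h : IsGreatest s a) :
    IsGreatest (convexHull ℝ s) a :=
  ⟨subset_convexHull ℝ s h.1, fun x hx =>
    (convexHull_min (fun _ hy => h.2 hy) (convex_Iic a) hx : x ≤ a)⟩

lemma satSet_finite (n : ℕ) : (SatSet n).Finite := by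
  classical
  have hsub : SatSet n ⊆
      (fun p : Finset (Clause n) × (Fin n → Bool) => (yVec p.1, xVec p.2)) '' Set.univ := by
    rintro p ⟨ψ, σ, -, rfl⟩; exact ⟨(ψ, σ), trivial, rfl⟩
  exact (Set.finite_univ.image _).subset hsub


/-- If the 2SAT formula `φ` on `n ≥ 2` variables is satisfiable,
`w ∈ ℤ^n` is a nonzero integer weight vector and `W = Σᵢ |wᵢ|`, then the maximum
`z*` over `Q_n` of `(y, x) ↦ ⟨c_φ, y⟩ + (1/(3W))·⟨w, x⟩` exists and satisfies
`z* ≥ m(φ) - 1/3`; moreover every point `(y^ψ, x^σ)` of the generating set `S`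
attaining the maximum has `ψ = φ`, and `σ` is a satisfying assignment of `φ` of
maximum weight `⟨w, x^σ⟩` among all satisfying assignments of `φ`. -/
theorem stmt_7 (n : ℕ) (hn : 2 ≤ n) (φ : Finset (Clause n))
    (hsat : ∃ σ : Fin n → Bool, Satisfies φ σ)
    (w : Fin n → ℤ) (hw : w ≠ 0) :
    ∃ zstar : ℝ,
      IsGreatest ((fun z : (Clause n → ℝ) × (Fin n → ℝ) =>
          ∑ C : Clause n, cVec φ C * z.1 C
            + (1 / (3 * ∑ i, |(w i : ℝ)|)) * ∑ i, (w i : ℝ) * z.2 i) '' Qn n) zstar ∧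
      (φ.card : ℝ) - 1 / 3 ≤ zstar ∧
      ∀ (ψ : Finset (Clause n)) (σ : Fin n → Bool), Satisfies ψ σ →
        (∑ C : Clause n, cVec φ C * yVec ψ C
            + (1 / (3 * ∑ i, |(w i : ℝ)|)) * ∑ i, (w i : ℝ) * xVec σ i) = zstar →
        ψ = φ ∧ Satisfies φ σ ∧
          ∀ σ' : Fin n → Bool, Satisfies φ σ' →
            ∑ i, (w i : ℝ) * xVec σ' i ≤ ∑ i, (w i : ℝ) * xVec σ i := by
  classical
  obtain ⟨σ0, hσ0⟩ := hsat
  set W : ℝ := ∑ i, |(w i : ℝ)| with hWdef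
  have hW1 : 1 ≤ W := by
    obtain ⟨j, hj⟩ : ∃ j, w j ≠ 0 := by
      by_contra h; push_neg at h; exact hw (funext h)
    have h1 : (1:ℝ) ≤ |(w j : ℝ)| := by
      have h2 : (1:ℤ) ≤ |w j| := Int.one_le_abs hj
      calc (1:ℝ) = ((1:ℤ):ℝ) := by norm_num
      _ ≤ ((|w j| : ℤ) : ℝ) := by exact_mod_cast h2
      _ = |(w j : ℝ)| := by push_cast; ring
    exact h1.trans (Finset.single_le_sum (f := fun i => |(w i : ℝ)|)
      (fun i _ => abs_nonneg _) (Finset.mem_univ j))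
  have hW0 : 0 < W := lt_of_lt_of_le one_pos hW1
  set k : ℝ := 1 / (3 * W) with hkdef
  have hk0 : 0 < k := by rw [hkdef]; positivity
  set L := objMap φ k w with hLdef
  have hEval : ∀ (ψ : Finset (Clause n)) (σ : Fin n → Bool),
      L (yVec ψ, xVec σ) = ((ψ ∩ φ).card : ℝ) - ((ψ \ φ).card : ℝ)
        + k * ∑ i, (w i : ℝ) * xVec σ i := by
    intro ψ σ
    show (∑ C : Clause n, cVec φ C * yVec ψ C) + k * ∑ i, (w i : ℝ) * xVec σ i = _
    rw [sum_cVec_yVec]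
  have hkw : ∀ σ : Fin n → Bool, |k * ∑ i, (w i : ℝ) * xVec σ i| ≤ 1/3 := by
    intro σ
    rw [abs_mul, abs_of_pos hk0]
    have h1 := weight_abs_le w σ
    calc k * |∑ i, (w i:ℝ) * xVec σ i| ≤ k * W := by
          exact mul_le_mul_of_nonneg_left h1 hk0.le
    _ = 1/3 := by rw [hkdef]; field_simp
  have hSfin := satSet_finite n
  have hne : (⇑L '' SatSet n).Nonempty := ⟨_, ⟨(yVec φ, xVec σ0), ⟨φ, σ0, hσ0, rfl⟩, rfl⟩⟩
  have hfin : (⇑L '' SatSet n).Finite := hSfin.image _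
  set zstar := sSup (⇑L '' SatSet n) with hzdef
  have hgrS : IsGreatest (⇑L '' SatSet n) zstar :=
    ⟨hne.csSup_mem hfin, fun x hx => le_csSup hfin.bddAbove hx⟩
  have hgrQ : IsGreatest (⇑L '' Qn n) zstar := by
    have himg : ⇑L '' Qn n = convexHull ℝ (⇑L '' SatSet n) := L.image_convexHull _
    rw [himg]
    exact isGreatest_convexHull_real hgrS
  have hEvalφ : ∀ σ : Fin n → Bool,
      L (yVec φ, xVec σ) = (φ.card : ℝ) + k * ∑ i, (w i : ℝ) * xVec σ i := by
    intro σ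
    rw [hEval φ σ, Finset.inter_self, Finset.sdiff_self]
    simp
  have hz1 : (φ.card:ℝ) - 1/3 ≤ zstar := by
    have hmem : L (yVec φ, xVec σ0) ∈ ⇑L '' SatSet n := ⟨_, ⟨φ, σ0, hσ0, rfl⟩, rfl⟩
    have h1 := hgrS.2 hmem
    have h2 := (abs_le.1 (hkw σ0)).1
    have h3 := hEvalφ σ0
    linarith
  refine ⟨zstar, hgrQ, hz1, ?_⟩
  intro ψ σ hσ heq
  have heq' : L (yVec ψ, xVec σ) = zstar := heq
  have hψφ : ψ = φ := by
    by_contra hne'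
    have hcard : ((ψ ∩ φ).card : ℝ) - ((ψ \ φ).card : ℝ) ≤ (φ.card : ℝ) - 1 := by
      by_cases hd : (ψ \ φ).Nonempty
      · have h1 : (1:ℝ) ≤ ((ψ \ φ).card : ℝ) := by
          exact_mod_cast Finset.Nonempty.card_pos hd
        have h2 : ((ψ ∩ φ).card : ℝ) ≤ (φ.card : ℝ) := by
          exact_mod_cast Finset.card_le_card Finset.inter_subset_right
        linarith
      · rw [Finset.not_nonempty_iff_eq_empty, Finset.sdiff_eq_empty_iff_subset] at hd
        have h3 : ψ.card < φ.card := Finset.card_lt_card (hd.ssubset_of_ne hne')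
        have h4 : ψ ∩ φ = ψ := Finset.inter_eq_left.2 hd
        have h5 : (ψ \ φ) = ∅ := Finset.sdiff_eq_empty_iff_subset.2 hd
        rw [h4, h5]
        have h6 : (ψ.card : ℝ) + 1 ≤ (φ.card : ℝ) := by exact_mod_cast h3
        simp
        linarith
    have hub := hEval ψ σ
    have hb := (abs_le.1 (hkw σ)).2
    rw [hub] at heq'
    linarith
  subst hψφ
  refine ⟨rfl, hσ, ?_⟩
  intro σ' hσ'
  have hmem' : L (yVec ψ, xVec σ') ∈ ⇑L '' SatSet n := ⟨_, ⟨ψ, σ', hσ', rfl⟩, rfl⟩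
  have hle := hgrS.2 hmem'
  rw [← heq'] at hle
  have e1 := hEvalφ σ'
  have e2 := hEvalφ σ
  have hkk : k * ∑ i, (w i : ℝ) * xVec σ' i ≤ k * ∑ i, (w i : ℝ) * xVec σ i := by linarith
  exact le_of_mul_le_mul_left hkk hk0
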